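/- If X, X_1, X_2, ... are i.i.d. with E[X^2] < ∞ and mean μ, then for every α > 2, almost surely ∑_{n=1}^∞ |S_n/n - μ|^α < ∞. -/

import Mathlib

open MeasureTheory ProbabilityTheory

lemma aux_sqrt_summable {u : ℕ → ℝ} (hu : ∀ k, 0 ≤ u k)
    (h : Summable fun k : ℕ => (2 * (k : ℝ) + 1) * u k) :
    Summable fun m => u (Nat.sqrt m) := by
  classical
  have hnn' : ∀ k : ℕ, 0 ≤ (2 * (k : ℝ) + 1) * u k :=
    fun k => mul_nonneg (by positivity) (hu k)
  refine summable_of_sum_range_le (c := ∑' k : ℕ, (2 * (k : ℝ) + 1) * u k) (fun m => hu _) fun M => ?_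
  have hmap : ∀ m ∈ Finset.range M, Nat.sqrt m ∈ Finset.range M := fun m hm =>
    Finset.mem_range.mpr (lt_of_le_of_lt (Nat.sqrt_le_self m) (Finset.mem_range.mp hm))
  rw [← Finset.sum_fiberwise_of_maps_to hmap (fun m => u (Nat.sqrt m))]
  refine le_trans (Finset.sum_le_sum fun k _ => ?_) (Summable.sum_le_tsum _ (fun k _ => hnn' k) h)
  have hconst : ∑ m ∈ (Finset.range M).filter (fun m => Nat.sqrt m = k), u (Nat.sqrt m)
      = (((Finset.range M).filter (fun m => Nat.sqrt m = k)).card : ℝ) * u k := by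
    rw [Finset.sum_congr rfl (fun m hm => by rw [(Finset.mem_filter.mp hm).2]),
      Finset.sum_const, nsmul_eq_mul]
  rw [hconst]
  have hsub : (Finset.range M).filter (fun m => Nat.sqrt m = k)
      ⊆ Finset.Ico (k * k) ((k + 1) * (k + 1)) := by
    intro m hm
    obtain ⟨-, hk⟩ := Finset.mem_filter.mp hm
    subst hk
    exact Finset.mem_Ico.mpr ⟨Nat.sqrt_le m, Nat.lt_succ_sqrt m⟩
  have hcard : (((Finset.range M).filter (fun m => Nat.sqrt m = k)).card : ℝ)
      ≤ 2 * (k : ℝ) + 1 := by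
    have := Finset.card_le_card hsub
    rw [Nat.card_Ico] at this
    have h2 : (k + 1) * (k + 1) - k * k = 2 * k + 1 := by
      have : (k + 1) * (k + 1) = k * k + (2 * k + 1) := by ring
      omega
    rw [h2] at this
    exact_mod_cast this
  exact mul_le_mul_of_nonneg_right hcard (hu k)

lemma aux_ae_summable {Ω : Type*} [MeasurableSpace Ω] (P : Measure Ω) {f : ℕ → Ω → ℝ}
    (hm : ∀ k, Measurable (f k)) (hnn : ∀ k ω, 0 ≤ f k ω)
    {C : ℕ → ℝ} (hint : ∀ k, Integrable (f k) P) (hC : ∀ k, ∫ ω, f k ω ∂P ≤ C k)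
    (hCs : Summable C) (hCnn : ∀ k, 0 ≤ C k) :
    ∀ᵐ ω ∂P, Summable fun k => f k ω := by
  have h1 : ∫⁻ ω, ∑' k, ENNReal.ofReal (f k ω) ∂P < ⊤ := by
    rw [lintegral_tsum fun k => ((hm k).ennreal_ofReal).aemeasurable]
    calc ∑' k, ∫⁻ ω, ENNReal.ofReal (f k ω) ∂P
        ≤ ∑' k, ENNReal.ofReal (C k) := by
          refine ENNReal.tsum_le_tsum fun k => ?_
          rw [← ofReal_integral_eq_lintegral_ofReal (hint k) (Filter.Eventually.of_forall (hnn k))]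
          exact ENNReal.ofReal_le_ofReal (hC k)
      _ = ENNReal.ofReal (∑' k, C k) := (ENNReal.ofReal_tsum_of_nonneg hCnn hCs).symm
      _ < ⊤ := ENNReal.ofReal_lt_top
  have hmeas : Measurable fun ω => ∑' k, ENNReal.ofReal (f k ω) :=
    Measurable.ennreal_tsum fun k => (hm k).ennreal_ofReal
  filter_upwards [ae_lt_top hmeas h1.ne] with ω hω
  have hs : Summable fun k => (f k ω).toNNReal := by
    refine ENNReal.tsum_coe_ne_top_iff_summable.mp ?_
    simpa [ENNReal.ofReal] using hω.ne
  have := NNReal.summable_coe.mpr hs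
  refine this.congr fun k => Real.coe_toNNReal _ (hnn k ω)

lemma aux_det {α : ℝ} (hα : 2 < α) {u : ℕ → ℝ} (hu : ∀ k, 0 ≤ u k)
    (h : Summable fun k : ℕ => (k : ℝ) ^ (2 / α) * u k ^ 2) (hu0 : u 0 = 0) :
    Summable fun k : ℕ => (2 * (k : ℝ) + 1) * u k ^ α := by
  have hαpos : (0 : ℝ) < α := by linarith
  set V : ℕ → ℝ := fun k => (k : ℝ) ^ (1 / α) * u k with hVdef
  have hVnn : ∀ k, 0 ≤ V k := fun k => mul_nonneg (Real.rpow_nonneg (Nat.cast_nonneg k) _) (hu k)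
  have hV2 : ∀ k, V k ^ 2 = (k : ℝ) ^ (2 / α) * u k ^ 2 := by
    intro k
    have h1 : ((k : ℝ) ^ (1 / α)) ^ 2 = (k : ℝ) ^ (2 / α) := by
      rw [← Real.rpow_natCast ((k : ℝ) ^ (1 / α)) 2, ← Real.rpow_mul (Nat.cast_nonneg k)]
      norm_num
      ring_nf
    rw [hVdef]
    simp only [mul_pow, h1]
  have hVsum2 : Summable fun k => V k ^ 2 := h.congr fun k => (hV2 k).symm
  have htend : Filter.Tendsto (fun k => V k ^ 2) Filter.atTop (nhds 0) :=
    hVsum2.tendsto_atTop_zero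
  have hev : ∀ᶠ k in Filter.atTop, V k ≤ 1 := by
    filter_upwards [htend.eventually_lt_const one_pos] with k hk
    nlinarith [hVnn k]
  obtain ⟨N, hN⟩ := Filter.eventually_atTop.mp hev
  have hVα : Summable fun k => V k ^ α := by
    rw [← summable_nat_add_iff N]
    refine Summable.of_nonneg_of_le (fun k => Real.rpow_nonneg (hVnn _) _) (fun k => ?_)
      ((summable_nat_add_iff N).mpr hVsum2)
    rcases eq_or_lt_of_le (hVnn (k + N)) with h0 | hpos
    · rw [← h0, Real.zero_rpow hαpos.ne']
      positivity
    · calc V (k + N) ^ α ≤ V (k + N) ^ (2 : ℝ) :=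
            Real.rpow_le_rpow_of_exponent_ge hpos (hN (k + N) (Nat.le_add_left N k)) (by linarith)
        _ = V (k + N) ^ 2 := by rw [← Real.rpow_natCast (V (k + N)) 2]; norm_num
  refine Summable.of_nonneg_of_le
    (fun k => mul_nonneg (by positivity) (Real.rpow_nonneg (hu k) _)) (fun k => ?_)
    (hVα.mul_left 3)
  rcases Nat.eq_zero_or_pos k with rfl | hk
  · rw [hu0, Real.zero_rpow hαpos.ne']
    simp [Real.rpow_nonneg (hVnn 0)]
  · have hk1 : (1 : ℝ) ≤ (k : ℝ) := by exact_mod_cast hk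
    have hVα_eq : V k ^ α = (k : ℝ) * u k ^ α := by
      rw [hVdef]
      simp only
      rw [Real.mul_rpow (Real.rpow_nonneg (Nat.cast_nonneg k) _) (hu k),
        ← Real.rpow_mul (Nat.cast_nonneg k)]
      have : 1 / α * α = 1 := by field_simp
      rw [this, Real.rpow_one]
    rw [hVα_eq]
    have hun : 0 ≤ u k ^ α := Real.rpow_nonneg (hu k) _
    nlinarith

set_option maxHeartbeats 1000000 in
/-- If `X, X₁, X₂, …` are i.i.d. with `E[X²] < ∞` and mean `μ`, then for every `α > 2`,
almost surely `∑ₙ |Sₙ/n − μ|^α < ∞`. -/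
theorem stmt5 {Ω : Type*} [MeasurableSpace Ω] (P : Measure Ω) [IsProbabilityMeasure P]
    (X : ℕ → Ω → ℝ) (X0 : Ω → ℝ) (μ : ℝ)
    (hmeas : ∀ i, Measurable (X i)) (hmeas0 : Measurable X0)
    (hindep : iIndepFun X P)
    (hident : ∀ i, IdentDistrib (X i) X0 P P)
    (hL2 : Integrable (fun ω => (X0 ω) ^ 2) P)
    (hmean : ∫ ω, X0 ω ∂P = μ)
    (α : ℝ) (hα : 2 < α) :
    ∀ᵐ ω ∂P, Summable (fun n : ℕ =>
      |(∑ i ∈ Finset.range (n + 1), X i ω) / (n + 1) - μ| ^ α) := by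
  have hαpos : (0 : ℝ) < α := by linarith
  -- basic L² facts
  have hX0L2 : MemLp X0 2 P :=
    (memLp_two_iff_integrable_sq hmeas0.aestronglyMeasurable).mpr hL2
  set Y : ℕ → Ω → ℝ := fun i ω => X i ω - μ with hYdef
  have hYmeas : ∀ i, Measurable (Y i) := fun i => (hmeas i).sub_const μ
  have hXL2 : ∀ i, MemLp (X i) 2 P := fun i => (hident i).symm.memLp_snd hX0L2
  have hYL2 : ∀ i, MemLp (Y i) 2 P := fun i => (hXL2 i).sub (memLp_const μ)
  have hYid : ∀ i, IdentDistrib (Y i) (fun ω => X0 ω - μ) P P :=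
    fun i => (hident i).comp (measurable_id.sub_const μ)
  have hYint : ∀ i, Integrable (Y i) P := fun i => (hYL2 i).integrable one_le_two
  have hYmean : ∀ i, ∫ ω, Y i ω ∂P = 0 := by
    intro i
    have h1 : ∫ ω, X i ω ∂P = μ := ((hident i).integral_eq).trans hmean
    rw [hYdef]
    rw [integral_sub ((hXL2 i).integrable one_le_two) (integrable_const μ), h1,
      integral_const]
    simp
  set σ2 : ℝ := ∫ ω, (X0 ω - μ) ^ 2 ∂P with hσ2
  have hσ2nn : 0 ≤ σ2 := integral_nonneg fun ω => sq_nonneg _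
  have hYsq : ∀ i, ∫ ω, (Y i ω) ^ 2 ∂P = σ2 := fun i =>
    ((hYid i).comp (measurable_id.pow_const 2)).integral_eq
  have hYvar : ∀ i, variance (Y i) P = σ2 := by
    intro i
    have h2 : ∫ ω, ((Y i) ^ 2) ω ∂P = σ2 := by simpa [Pi.pow_apply] using hYsq i
    rw [variance_eq_sub (hYL2 i), h2, hYmean i]
    ring
  have hYindep : iIndepFun Y P :=
    hindep.comp (fun _ x => x - μ) (fun _ => measurable_id.sub_const μ)
  -- second moment of partial sums
  have hA : ∀ m : ℕ, ∫ ω, (∑ i ∈ Finset.range m, Y i ω) ^ 2 ∂P = m * σ2 := by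
    intro m
    have hmem : ∀ i ∈ Finset.range m, MemLp (Y i) 2 P := fun i _ => hYL2 i
    have hsumL2 : MemLp (∑ i ∈ Finset.range m, Y i) 2 P := memLp_finset_sum' _ hmem
    have hmean0 : ∫ ω, (∑ i ∈ Finset.range m, Y i) ω ∂P = 0 := by
      simp only [Finset.sum_apply]
      rw [integral_finset_sum _ fun i _ => hYint i]
      simp [hYmean]
    have hvar : variance (∑ i ∈ Finset.range m, Y i) P = m * σ2 := by
      rw [IndepFun.variance_sum hmem
        (fun i _ j _ hij => hYindep.indepFun hij)]
      simp [hYvar]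
    rw [variance_eq_sub hsumL2, hmean0] at hvar
    simp only [Pi.pow_apply, Finset.sum_apply] at hvar
    simpa using hvar
  -- the block quantities
  set A : ℕ → Ω → ℝ := fun k => ∑ i ∈ Finset.range (k * k), Y i with hAdef
  set B : ℕ → Ω → ℝ := fun k => ∑ i ∈ Finset.Ico (k * k) ((k + 1) * (k + 1)), |Y i| with hBdef
  have hAapp : ∀ k ω, A k ω = ∑ i ∈ Finset.range (k * k), Y i ω := by
    intro k ω; rw [hAdef]; simp
  have hBapp : ∀ k ω, B k ω = ∑ i ∈ Finset.Ico (k * k) ((k + 1) * (k + 1)), |Y i ω| := by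
    intro k ω; rw [hBdef]; simp
  set U : ℕ → Ω → ℝ := fun k ω => (|A k ω| + B k ω) / ((k : ℝ) * k) with hUdef
  have hUnn : ∀ k ω, 0 ≤ U k ω := by
    intro k ω
    apply div_nonneg _ (by positivity)
    have : 0 ≤ B k ω := by
      rw [hBapp]; exact Finset.sum_nonneg fun i _ => abs_nonneg _
    positivity
  have hU0 : ∀ ω, U 0 ω = 0 := by intro ω; rw [hUdef]; simp
  have hAL2 : ∀ k, MemLp (A k) 2 P := fun k => memLp_finset_sum' _ fun i _ => hYL2 i
  have hBL2 : ∀ k, MemLp (B k) 2 P := fun k => memLp_finset_sum' _ fun i _ => (hYL2 i).abs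
  have hABL2 : ∀ k, MemLp (fun ω => |A k ω| + B k ω) 2 P := fun k => (hAL2 k).abs.add (hBL2 k)
  have hABsq_int : ∀ k, Integrable (fun ω => (|A k ω| + B k ω) ^ 2) P := fun k =>
    (hABL2 k).integrable_sq
  have hUmeas : ∀ k, Measurable (U k) := by
    intro k
    have hAm : Measurable (A k) := by
      have : A k = fun ω => ∑ i ∈ Finset.range (k * k), Y i ω := funext fun ω => hAapp k ω
      rw [this]
      exact Finset.measurable_sum _ fun i _ => hYmeas i
    have hBm : Measurable (B k) := by
      have : B k = fun ω => ∑ i ∈ Finset.Ico (k * k) ((k + 1) * (k + 1)), |Y i ω| :=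
        funext fun ω => hBapp k ω
      rw [this]
      exact Finset.measurable_sum _ fun i _ => (hYmeas i).abs
    exact (hAm.abs.add hBm).div_const _
  -- integral bounds
  set c2 : ℝ := 2 / α with hc2
  have hc2pos : 0 < c2 := by rw [hc2]; positivity
  have hc2lt : c2 < 1 := by rw [hc2, div_lt_one hαpos]; linarith
  have hc2ne : c2 - 2 ≠ 0 := sub_ne_zero.mpr (ne_of_lt (by linarith))
  have hfk_int : ∀ k : ℕ, Integrable (fun ω => (k : ℝ) ^ c2 * (U k ω) ^ 2) P := by
    intro k
    have h1 := (hABsq_int k).const_mul ((k : ℝ) ^ c2 / ((k : ℝ) * k) ^ 2)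
    refine h1.congr (Filter.Eventually.of_forall fun ω => ?_)
    rw [hUdef]
    simp only
    rw [div_pow]
    ring
  have hfk_meas : ∀ k : ℕ, Measurable fun ω => (k : ℝ) ^ c2 * (U k ω) ^ 2 := fun k =>
    ((hUmeas k).pow_const 2).const_mul _
  have hfk_nn : ∀ (k : ℕ) (ω : Ω), 0 ≤ (k : ℝ) ^ c2 * (U k ω) ^ 2 := fun k ω => by positivity
  have hCbound : ∀ k : ℕ, ∫ ω, (k : ℝ) ^ c2 * (U k ω) ^ 2 ∂P ≤ 20 * σ2 * (k : ℝ) ^ (c2 - 2) := by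
    intro k
    rcases Nat.eq_zero_or_pos k with rfl | hk
    · simp [Real.zero_rpow hc2pos.ne', Real.zero_rpow hc2ne]
    · have hkR : (1 : ℝ) ≤ (k : ℝ) := by exact_mod_cast hk
      have hkpos : (0 : ℝ) < (k : ℝ) := by linarith
      have hkne : (k : ℝ) ≠ 0 := hkpos.ne'
      have hAint : ∫ ω, (A k ω) ^ 2 ∂P = (k : ℝ) * k * σ2 := by
        have h1 : ∫ ω, (A k ω) ^ 2 ∂P = ((k * k : ℕ) : ℝ) * σ2 := by
          simp only [hAapp]
          exact hA (k * k)
        rw [h1]; push_cast; ring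
      set s : Finset ℕ := Finset.Ico (k * k) ((k + 1) * (k + 1)) with hs
      have hcard : (s.card : ℝ) = 2 * (k : ℝ) + 1 := by
        rw [hs, Nat.card_Ico]
        have h2 : (k + 1) * (k + 1) - k * k = 2 * k + 1 := by
          have : (k + 1) * (k + 1) = k * k + (2 * k + 1) := by ring
          omega
        rw [h2]; push_cast; ring
      have hBpt : ∀ ω, (B k ω) ^ 2 ≤ (2 * (k : ℝ) + 1) * ∑ i ∈ s, (Y i ω) ^ 2 := by
        intro ω
        rw [hBapp]
        calc (∑ i ∈ s, |Y i ω|) ^ 2 ≤ (s.card : ℝ) * ∑ i ∈ s, |Y i ω| ^ 2 :=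
              sq_sum_le_card_mul_sum_sq
          _ = (2 * (k : ℝ) + 1) * ∑ i ∈ s, (Y i ω) ^ 2 := by rw [hcard]; simp [sq_abs]
      have hsum_int : Integrable (fun ω => (2 * (k : ℝ) + 1) * ∑ i ∈ s, (Y i ω) ^ 2) P :=
        (integrable_finset_sum s fun i _ => (hYL2 i).integrable_sq).const_mul _
      have hBint : ∫ ω, (B k ω) ^ 2 ∂P ≤ (2 * (k : ℝ) + 1) * ((2 * (k : ℝ) + 1) * σ2) := by
        have h1 := integral_mono ((hBL2 k).integrable_sq) hsum_int hBpt
        rw [integral_const_mul, integral_finset_sum _ (fun i _ => (hYL2 i).integrable_sq)] at h1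
        simp only [hYsq] at h1
        rw [Finset.sum_const, nsmul_eq_mul] at h1
        calc ∫ ω, (B k ω) ^ 2 ∂P ≤ (2 * (k : ℝ) + 1) * ((s.card : ℝ) * σ2) := h1
          _ = (2 * (k : ℝ) + 1) * ((2 * (k : ℝ) + 1) * σ2) := by rw [hcard]
      have hABint : ∫ ω, (|A k ω| + B k ω) ^ 2 ∂P ≤ 20 * ((k : ℝ) * k) * σ2 := by
        have hpt : ∀ ω, (|A k ω| + B k ω) ^ 2 ≤ 2 * (A k ω) ^ 2 + 2 * (B k ω) ^ 2 := by
          intro ω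
          have h1 : |A k ω| ^ 2 = (A k ω) ^ 2 := sq_abs _
          nlinarith [sq_nonneg (|A k ω| - B k ω)]
        have h2 : ∫ ω, (|A k ω| + B k ω) ^ 2 ∂P
            ≤ ∫ ω, (2 * (A k ω) ^ 2 + 2 * (B k ω) ^ 2) ∂P :=
          integral_mono (hABsq_int k)
            ((((hAL2 k).integrable_sq).const_mul 2).add (((hBL2 k).integrable_sq).const_mul 2)) hpt
        rw [integral_add (((hAL2 k).integrable_sq).const_mul 2)
            (((hBL2 k).integrable_sq).const_mul 2),
          integral_const_mul, integral_const_mul, hAint] at h2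
        have h9 : (2 * (k : ℝ) + 1) * ((2 * (k : ℝ) + 1) * σ2) ≤ 9 * ((k : ℝ) * k) * σ2 := by
          nlinarith [mul_nonneg (mul_nonneg (by linarith : (0:ℝ) ≤ 5 * (k:ℝ) + 1)
            (by linarith : (0:ℝ) ≤ (k:ℝ) - 1)) hσ2nn]
        linarith [h2, hBint, h9]
      have hUint : ∫ ω, (k : ℝ) ^ c2 * (U k ω) ^ 2 ∂P
          = ((k : ℝ) ^ c2 / ((k : ℝ) * k) ^ 2) * ∫ ω, (|A k ω| + B k ω) ^ 2 ∂P := by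
        rw [← integral_const_mul]
        congr 1
        funext ω
        rw [hUdef]
        simp only
        rw [div_pow]
        ring
      rw [hUint]
      have hstep : ((k : ℝ) ^ c2 / ((k : ℝ) * k) ^ 2) * (20 * ((k : ℝ) * k) * σ2)
          = 20 * σ2 * (k : ℝ) ^ (c2 - 2) := by
        rw [Real.rpow_sub hkpos, Real.rpow_two]
        field_simp
      calc ((k : ℝ) ^ c2 / ((k : ℝ) * k) ^ 2) * ∫ ω, (|A k ω| + B k ω) ^ 2 ∂P
          ≤ ((k : ℝ) ^ c2 / ((k : ℝ) * k) ^ 2) * (20 * ((k : ℝ) * k) * σ2) :=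
            mul_le_mul_of_nonneg_left hABint (by positivity)
        _ = 20 * σ2 * (k : ℝ) ^ (c2 - 2) := hstep
  have hCs : Summable (fun k : ℕ => 20 * σ2 * (k : ℝ) ^ (c2 - 2)) :=
    (Real.summable_nat_rpow.mpr (by linarith)).mul_left _
  have hCnn : ∀ k : ℕ, 0 ≤ 20 * σ2 * (k : ℝ) ^ (c2 - 2) := fun k => by positivity
  have hae := aux_ae_summable P hfk_meas hfk_nn hfk_int hCbound hCs hCnn
  -- pointwise domination
  have hdom : ∀ (ω : Ω) (n : ℕ),
      |(∑ i ∈ Finset.range (n + 1), X i ω) / ((n : ℝ) + 1) - μ| ≤ U (Nat.sqrt (n + 1)) ω := by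
    intro ω n
    set m := n + 1 with hm
    set k := Nat.sqrt m with hkdef
    have hkm : k * k ≤ m := Nat.sqrt_le m
    have hmk : m ≤ (k + 1) * (k + 1) := le_of_lt (Nat.lt_succ_sqrt m)
    have hk1 : 1 ≤ k := by
      rw [hkdef]
      exact Nat.sqrt_pos.mpr (Nat.succ_pos n)
    have hmpos : (0 : ℝ) < (n : ℝ) + 1 := by positivity
    have h1 : (∑ i ∈ Finset.range m, X i ω) / ((n : ℝ) + 1) - μ
        = (∑ i ∈ Finset.range m, Y i ω) / ((n : ℝ) + 1) := by
      have hmne : ((n : ℝ) + 1) ≠ 0 := ne_of_gt hmpos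
      have hsum : ∑ i ∈ Finset.range m, Y i ω
          = (∑ i ∈ Finset.range m, X i ω) - ((n : ℝ) + 1) * μ := by
        rw [hYdef]
        rw [Finset.sum_sub_distrib, Finset.sum_const, Finset.card_range, nsmul_eq_mul, hm]
        push_cast
        ring
      rw [hsum, sub_div, mul_div_cancel_left₀ μ hmne]
    rw [h1, abs_div, abs_of_pos hmpos]
    have hnum : |∑ i ∈ Finset.range m, Y i ω| ≤ |A k ω| + B k ω := by
      have hsplit : ∑ i ∈ Finset.range m, Y i ω
          = A k ω + ∑ i ∈ Finset.Ico (k * k) m, Y i ω := by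
        rw [hAapp]
        exact (Finset.sum_range_add_sum_Ico _ hkm).symm
      rw [hsplit]
      calc |A k ω + ∑ i ∈ Finset.Ico (k * k) m, Y i ω|
          ≤ |A k ω| + |∑ i ∈ Finset.Ico (k * k) m, Y i ω| := abs_add_le _ _
        _ ≤ |A k ω| + ∑ i ∈ Finset.Ico (k * k) m, |Y i ω| :=
            add_le_add_right (Finset.abs_sum_le_sum_abs _ _) _
        _ ≤ |A k ω| + B k ω := by
            rw [hBapp]
            exact add_le_add_right (Finset.sum_le_sum_of_subset_of_nonneg
              (Finset.Ico_subset_Ico_right hmk) fun i _ _ => abs_nonneg _) _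
    have hden : ((k : ℝ) * k) ≤ (n : ℝ) + 1 := by
      have h2 : ((k * k : ℕ) : ℝ) ≤ ((m : ℕ) : ℝ) := by exact_mod_cast hkm
      rw [hm] at h2
      push_cast at h2
      push_cast
      linarith
    have hABnn : 0 ≤ |A k ω| + B k ω := by
      have : 0 ≤ B k ω := by
        rw [hBapp]; exact Finset.sum_nonneg fun i _ => abs_nonneg _
      positivity
    have hkkpos : (0 : ℝ) < (k : ℝ) * k := by
      have : (1 : ℝ) ≤ (k : ℝ) := by exact_mod_cast hk1
      nlinarith
    rw [hUdef]
    simp only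
    calc |∑ i ∈ Finset.range m, Y i ω| / ((n : ℝ) + 1)
        ≤ (|A k ω| + B k ω) / ((n : ℝ) + 1) := by gcongr
      _ ≤ (|A k ω| + B k ω) / ((k : ℝ) * k) := by gcongr
  -- conclusion
  filter_upwards [hae] with ω hω
  rw [hc2] at hω
  have hdet := aux_det hα (fun k => hUnn k ω) hω (hU0 ω)
  have hsq := aux_sqrt_summable (u := fun k => U k ω ^ α)
    (fun k => Real.rpow_nonneg (hUnn k ω) _) hdet
  have hshift : Summable fun n : ℕ => U (Nat.sqrt (n + 1)) ω ^ α :=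
    (summable_nat_add_iff 1).mpr hsq
  refine Summable.of_nonneg_of_le (fun n => Real.rpow_nonneg (abs_nonneg _) _)
    (fun n => ?_) hshift
  exact Real.rpow_le_rpow (abs_nonneg _) (hdom ω n) hαpos.le
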